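/- Let R be a commutative ring, J a finite index set, and for each j ∈ J a finite set I_j; let x_{j,i} ∈ R be given for all j ∈ J and i ∈ I_j. Suppose that for every choice function c assigning to each j ∈ J an element c(j) ∈ I_j, the ideal of R generated by {x_{j,c(j)} : j ∈ J} is the unit ideal. Then the ideal of R generated by the products {∏_{i ∈ I_j} x_{j,i} : j ∈ J} is also the unit ideal. -/
import Mathlib

/-- If for every choice function `c` the elements `x j (c j)` generate the unit ideal,
then the products `∏_{i ∈ I j} x j i` generate the unit ideal. -/
theorem stmt5 {R : Type*} [CommRing R] {J : Type*} [Fintype J]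
    {I : J → Type*} [∀ j, Fintype (I j)] (x : ∀ j, I j → R)
    (h : ∀ c : ∀ j, I j, Ideal.span (Set.range fun j => x j (c j)) = ⊤) :
    Ideal.span (Set.range fun j => ∏ i, x j i) = ⊤ := by
  by_contra hne
  obtain ⟨m, hm, hle⟩ := Ideal.exists_le_maximal _ hne
  haveI := hm.isPrime
  have hc : ∀ j : J, ∃ i : I j, x j i ∈ m := by
    intro j
    have hprod : (∏ i, x j i) ∈ m :=
      hle (Ideal.subset_span ⟨j, rfl⟩)
    rcases (Ideal.IsPrime.prod_mem_iff).mp hprod with ⟨i, _, hi⟩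
    exact ⟨i, hi⟩
  choose c hcm using hc
  have : Ideal.span (Set.range fun j => x j (c j)) ≤ m := by
    rw [Ideal.span_le]
    rintro _ ⟨j, rfl⟩
    exact hcm j
  rw [h c] at this
  exact hm.ne_top (top_le_iff.mp this)
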